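/- Sky band structure lemma: Let α be a linear order, m ≥ 1, and D a finite set of tuples in (Fin m → α). Suppose t ∈ D is dominated by exactly h tuples of D, where h ≥ 1. Then there exists u ∈ D such that (i) u dominates t, (ii) u is dominated by at most h − 1 tuples of D (i.e., u lies on the top-h sky band of D), and (iii) t is a skyline tuple of the domination subspace of u, i.e., no tuple w ∈ D that is dominated by u dominates t. -/

import Mathlib

/-- `t'` dominates `t`: `t' ≠ t` and `t'` is at least as good (≤) on every attribute. -/
def Dominates {α : Type*} [LinearOrder α] {m : ℕ} (t' t : Fin m → α) : Prop :=
  t' ≠ t ∧ ∀ i, t' i ≤ t i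

instance {α : Type*} [LinearOrder α] {m : ℕ} (t' t : Fin m → α) :
    Decidable (Dominates t' t) := by
  unfold Dominates; infer_instance

lemma dominates_iff_lt {α : Type*} [LinearOrder α] {m : ℕ} (t' t : Fin m → α) :
    Dominates t' t ↔ t' < t := by
  rw [lt_iff_le_and_ne, Dominates, Pi.le_def, and_comm]

/-- Sky band structure lemma: if `t ∈ D` is dominated by exactly `h ≥ 1` tuples of `D`,
then there is a tuple `u ∈ D` dominating `t` which itself is dominated by at most
`h − 1` tuples of `D` (i.e. `u` is on the top-`h` sky band), and `t` is a skyline tuple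
of the domination subspace of `u`: no tuple of `D` dominated by `u` dominates `t`. -/
theorem sky_band_structure {α : Type*} [LinearOrder α] {m : ℕ} (hm : 1 ≤ m)
    (D : Finset (Fin m → α)) (t : Fin m → α) (ht : t ∈ D) (h : ℕ) (hh : 1 ≤ h)
    (hdom : (D.filter (fun u => Dominates u t)).card = h) :
    ∃ u ∈ D, Dominates u t ∧
      (D.filter (fun w => Dominates w u)).card ≤ h - 1 ∧
      ∀ w ∈ D, Dominates u w → ¬ Dominates w t := by
  set S := D.filter (fun u => Dominates u t) with hS
  have hSne : S.Nonempty := by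
    rw [← Finset.card_pos, hdom]; omega
  obtain ⟨u, huS, hmax⟩ := S.exists_maximal hSne
  obtain ⟨huD, hut⟩ := Finset.mem_filter.mp huS
  refine ⟨u, huD, hut, ?_, ?_⟩
  · have hsub : D.filter (fun w => Dominates w u) ⊆ S.erase u := by
      intro w hw
      obtain ⟨hwD, hwu⟩ := Finset.mem_filter.mp hw
      rw [dominates_iff_lt] at hwu
      rw [dominates_iff_lt] at hut
      refine Finset.mem_erase.mpr ⟨ne_of_lt hwu, Finset.mem_filter.mpr ⟨hwD, ?_⟩⟩
      rw [dominates_iff_lt]; exact hwu.trans hut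
    calc (D.filter (fun w => Dominates w u)).card ≤ (S.erase u).card :=
          Finset.card_le_card hsub
      _ = S.card - 1 := Finset.card_erase_of_mem huS
      _ ≤ h - 1 := by rw [hdom]
  · intro w hwD huw hwt
    have hwS : w ∈ S := Finset.mem_filter.mpr ⟨hwD, hwt⟩
    exact lt_irrefl u (lt_of_lt_of_le ((dominates_iff_lt u w).mp huw) (hmax hwS ((dominates_iff_lt u w).mp huw).le))
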